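/- arXiv:2003.01897 — 4 statements merged into one kernel-verified Lean document; each statement's English description precedes it below -/
import Mathlib

section
/- For fixed λ > 0 the function γ ↦ (b·λ² + σ²·γ²) / (γ² + λ)² of γ ≥ 0 is monotone non-increasing whenever λ ≥ λ* := σ²/(2b), for any b > 0 and σ > 0. (Here b plays the role of ‖β*‖²/d.) -/
/-- For fixed `λ > 0`, the function `γ ↦ (b λ² + σ² γ²)/(γ² + λ)²` is monotone non-increasing on
`γ ≥ 0` whenever `λ ≥ σ²/(2b)`, for any `b > 0` and `σ > 0`. -/
theorem antitoneOn_scalarized_risk (b σ lam : ℝ) (hb : 0 < b) (hσ : 0 < σ) (hlam : 0 < lam)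
    (h : σ ^ 2 / (2 * b) ≤ lam) :
    AntitoneOn (fun γ : ℝ => (b * lam ^ 2 + σ ^ 2 * γ ^ 2) / (γ ^ 2 + lam) ^ 2)
      (Set.Ici (0 : ℝ)) := by
  have h' : σ ^ 2 ≤ 2 * b * lam := by
    rw [div_le_iff₀ (by positivity)] at h; linarith
  intro x hx y hy hxy
  simp only [Set.mem_Ici] at hx hy
  have hxp : (0:ℝ) < (x ^ 2 + lam) ^ 2 := by positivity
  have hyp : (0:ℝ) < (y ^ 2 + lam) ^ 2 := by positivity
  rw [div_le_div_iff₀ hyp hxp]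
  have hsq : x ^ 2 ≤ y ^ 2 := by nlinarith
  have h1 : 0 ≤ (y ^ 2 - x ^ 2) * (2 * b * lam ^ 3 - σ ^ 2 * lam ^ 2) := by
    apply mul_nonneg (by linarith)
    nlinarith [sq_nonneg lam, mul_le_mul_of_nonneg_right h' (sq_nonneg lam)]
  have h2 : 0 ≤ (y ^ 2 - x ^ 2) * (b * lam ^ 2 * (x ^ 2 + y ^ 2)) :=
    mul_nonneg (by linarith) (by positivity)
  have h3 : 0 ≤ (y ^ 2 - x ^ 2) * (σ ^ 2 * x ^ 2 * y ^ 2) :=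
    mul_nonneg (by linarith) (by positivity)
  nlinarith [h1, h2, h3]
end

section
/- Optimal ridge parameter in the scalarized risk: for fixed nonnegative reals γ_1,…,γ_d (not all determining a degenerate case), the function λ ↦ Σ_{i=1}^d (B λ²/d + σ² γ_i²)/(γ_i²+λ)² on (0,∞), where B = ‖β*‖² > 0 and σ > 0, has derivative equal to 2(Bλ/d − σ²)·Σ_i γ_i²/(γ_i²+λ)³; hence it is minimized at λ = dσ²/B whenever some γ_i > 0. -/
private lemma ridge_key (a c g l L : ℝ) (ha : 0 < a) (hg : 0 ≤ g) (hl : 0 < l) (hL : 0 < L)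
    (hcL : c = a * L * g) :
    (a * L ^ 2 + c) / (g + L) ^ 2 ≤ (a * l ^ 2 + c) / (g + l) ^ 2 := by
  rw [div_le_div_iff₀ (by positivity) (by positivity)]
  subst hcL
  nlinarith [mul_nonneg (mul_nonneg ha.le (add_pos_of_nonneg_of_pos hg hL).le)
      (mul_nonneg hg (sq_nonneg (l - L)))]

/-- Optimal ridge parameter in the scalarized risk: the function
`f(λ) = ∑ᵢ (Bλ²/d + σ²γᵢ²)/(γᵢ²+λ)²` on `(0,∞)` has derivative
`2(Bλ/d − σ²) ∑ᵢ γᵢ²/(γᵢ²+λ)³`; hence it is minimized at `λ = dσ²/B`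
whenever some `γᵢ > 0`. -/
theorem optimal_ridge_parameter (d : ℕ) (hd : 0 < d) (B σ : ℝ) (hB : 0 < B) (hσ : 0 < σ)
    (γ : Fin d → ℝ) (hγ : ∀ i, 0 ≤ γ i) (hpos : ∃ i, 0 < γ i) :
    (∀ lam : ℝ, 0 < lam →
      HasDerivAt
        (fun l : ℝ => ∑ i, (B * l ^ 2 / (d : ℝ) + σ ^ 2 * γ i ^ 2) / (γ i ^ 2 + l) ^ 2)
        (2 * (B * lam / (d : ℝ) - σ ^ 2) * ∑ i, γ i ^ 2 / (γ i ^ 2 + lam) ^ 3) lam) ∧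
    ∀ lam : ℝ, 0 < lam →
      ∑ i, (B * ((d : ℝ) * σ ^ 2 / B) ^ 2 / (d : ℝ) + σ ^ 2 * γ i ^ 2)
          / (γ i ^ 2 + (d : ℝ) * σ ^ 2 / B) ^ 2
        ≤ ∑ i, (B * lam ^ 2 / (d : ℝ) + σ ^ 2 * γ i ^ 2) / (γ i ^ 2 + lam) ^ 2 := by
  have hd0 : ((d : ℝ)) ≠ 0 := Nat.cast_ne_zero.mpr hd.ne'
  have hdpos : (0:ℝ) < d := Nat.cast_pos.mpr hd
  constructor
  · intro lam hlam
    have hsum : HasDerivAt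
        (fun l : ℝ => ∑ i, (B * l ^ 2 / (d : ℝ) + σ ^ 2 * γ i ^ 2) / (γ i ^ 2 + l) ^ 2)
        (∑ i, 2 * (B * lam / (d : ℝ) - σ ^ 2) * (γ i ^ 2 / (γ i ^ 2 + lam) ^ 3)) lam := by
      apply HasDerivAt.fun_sum
      intro i _
      have hden : (γ i ^ 2 + lam) ≠ 0 := by positivity
      have h1 : HasDerivAt (fun l : ℝ => B * l ^ 2 / (d : ℝ) + σ ^ 2 * γ i ^ 2)
          (B * (↑2 * lam ^ (2 - 1)) / (d : ℝ)) lam :=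
        (((hasDerivAt_pow 2 lam).const_mul B).div_const (d : ℝ)).add_const _
      have h2 : HasDerivAt (fun l : ℝ => (γ i ^ 2 + l) ^ 2)
          (↑2 * (γ i ^ 2 + lam) ^ (2 - 1) * 1) lam :=
        ((hasDerivAt_id lam).const_add (γ i ^ 2)).pow 2
      have := h1.fun_div h2 (pow_ne_zero 2 hden)
      convert this using 1
      · rfl
      field_simp
      ring
    convert hsum using 1
    rw [Finset.mul_sum]
  · intro lam hlam
    apply Finset.sum_le_sum
    intro i _
    have hL : (0:ℝ) < (d : ℝ) * σ ^ 2 / B := by positivity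
    have h := ridge_key (B / (d : ℝ)) (σ ^ 2 * γ i ^ 2) (γ i ^ 2) lam ((d : ℝ) * σ ^ 2 / B)
      (by positivity) (by positivity) hlam hL (by field_simp)
    have e1 : B / (d : ℝ) * lam ^ 2 + σ ^ 2 * γ i ^ 2 = B * lam ^ 2 / (d : ℝ) + σ ^ 2 * γ i ^ 2 := by ring
    have e2 : B / (d : ℝ) * ((d : ℝ) * σ ^ 2 / B) ^ 2 + σ ^ 2 * γ i ^ 2
        = B * ((d : ℝ) * σ ^ 2 / B) ^ 2 / (d : ℝ) + σ ^ 2 * γ i ^ 2 := by ring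
    rw [e1, e2] at h
    exact h
end

section
/- Over-regularization monotonicity (deterministic core): if λ ≥ dσ²/(2‖β*‖²) and 0 ≤ γ_i ≤ γ̃_i for all i, then Σ_{i=1}^d (‖β*‖²λ²/d + σ²γ̃_i²)/(γ̃_i²+λ)² ≤ Σ_{i=1}^d (‖β*‖²λ²/d + σ²γ_i²)/(γ_i²+λ)². -/
/-- Over-regularization monotonicity (deterministic core): if `λ ≥ dσ²/(2‖β*‖²)` and
`0 ≤ γᵢ ≤ γ̃ᵢ` for all `i`, then
`∑ᵢ (‖β*‖²λ²/d + σ²γ̃ᵢ²)/(γ̃ᵢ²+λ)² ≤ ∑ᵢ (‖β*‖²λ²/d + σ²γᵢ²)/(γᵢ²+λ)²`. -/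
theorem overregularization_monotone (d : ℕ) (σ lam : ℝ) (hσ : 0 < σ)
    (β : Fin d → ℝ) (hβ : β ≠ 0) (hlam : 0 < lam)
    (h : (d : ℝ) * σ ^ 2 / (2 * ∑ j, β j ^ 2) ≤ lam)
    (γ γt : Fin d → ℝ) (hγ : ∀ i, 0 ≤ γ i) (hle : ∀ i, γ i ≤ γt i) :
    ∑ i, ((∑ j, β j ^ 2) * lam ^ 2 / (d : ℝ) + σ ^ 2 * γt i ^ 2) / (γt i ^ 2 + lam) ^ 2
      ≤ ∑ i, ((∑ j, β j ^ 2) * lam ^ 2 / (d : ℝ) + σ ^ 2 * γ i ^ 2)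
          / (γ i ^ 2 + lam) ^ 2 := by
  rcases Nat.eq_zero_or_pos d with hd | hd
  · subst hd; simp
  have hdR : (0 : ℝ) < d := by exact_mod_cast hd
  set B := ∑ j, β j ^ 2 with hB
  have hBpos : 0 < B := by
    have : ∃ j, β j ≠ 0 := by
      by_contra hc
      push_neg at hc
      exact hβ (funext hc)
    obtain ⟨j, hj⟩ := this
    exact Finset.sum_pos' (fun i _ => sq_nonneg _)
      ⟨j, Finset.mem_univ j, by positivity⟩
  have hkey : (d : ℝ) * σ ^ 2 ≤ 2 * B * lam := by
    rw [div_le_iff₀ (by positivity)] at h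
    nlinarith
  apply Finset.sum_le_sum
  intro i _
  set x := γ i ^ 2 with hx
  set y := γt i ^ 2 with hy
  have hx0 : 0 ≤ x := sq_nonneg _
  have hxy : x ≤ y := by
    have := hle i; have := hγ i
    nlinarith
  have hxl : 0 < x + lam := by linarith
  have hyl : 0 < y + lam := by linarith
  rw [div_le_div_iff₀ (by positivity) (by positivity)]
  have hc : 0 ≤ B * lam ^ 2 / d := by positivity
  have hc2 : σ ^ 2 * lam * (d : ℝ) ≤ 2 * (B * lam ^ 2 / d) * (d : ℝ) := by
    field_simp
    nlinarith
  have hc2' : σ ^ 2 * lam ≤ 2 * (B * lam ^ 2 / d) :=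
    le_of_mul_le_mul_right (by linarith) hdR
  nlinarith [sq_nonneg (x - y), mul_nonneg hx0 (le_of_lt hyl), sq_nonneg lam,
    mul_nonneg (mul_nonneg hx0 (sq_nonneg σ)) (sub_nonneg.2 hxy),
    mul_nonneg hc (sub_nonneg.2 hxy), mul_nonneg (mul_nonneg hc (sub_nonneg.2 hxy)) (le_of_lt hxl),
    mul_nonneg (sub_nonneg.2 hc2') (sub_nonneg.2 hxy)]
end

section
/- First-order optimality transfer implies monotonicity (abstract form): let G_λ, G'_λ be symmetric PSD-matrix-valued differentiable functions of λ > 0, H_λ, H'_λ real-valued differentiable with dH_λ/dλ < 0, and suppose at some λ₀ > 0: (i) βᵀ(dG/dλ)β + σ²(dH/dλ) = 0 at λ₀ (first-order optimality), (ii) G_{λ₀} − G'_{λ₀} ⪰ 0, (iii) (G_{λ₀} − G'_{λ₀}) − (H_{λ₀} − H'_{λ₀})·(dG_λ/dλ)/(dH_λ/dλ)|_{λ₀} ⪰ 0. Then βᵀG_{λ₀}β + σ²H_{λ₀} ≥ βᵀG'_{λ₀}β + σ²H'_{λ₀}. -/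
open Matrix

/-- First-order optimality transfer implies monotonicity (abstract form): given symmetric
PSD-matrix-valued differentiable `G, G'` and real differentiable `H, H'` with `dH/dλ < 0`, if at
some `λ₀ > 0` we have (i) `βᵀ(dG/dλ)β + σ²(dH/dλ) = 0`, (ii) `G_{λ₀} − G'_{λ₀} ⪰ 0`, and
(iii) `(G_{λ₀} − G'_{λ₀}) − (H_{λ₀} − H'_{λ₀})·(dG/dλ)/(dH/dλ) ⪰ 0`, then
`βᵀG_{λ₀}β + σ²H_{λ₀} ≥ βᵀG'_{λ₀}β + σ²H'_{λ₀}`. -/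
theorem optimality_transfer_monotonicity (d : ℕ) (σ : ℝ) (hσ : 0 < σ) (β : Fin d → ℝ)
    (G G' Gd Gd' : ℝ → Matrix (Fin d) (Fin d) ℝ) (H H' Hd Hd' : ℝ → ℝ)
    (hGpsd : ∀ l : ℝ, 0 < l → (G l).PosSemidef ∧ (G' l).PosSemidef)
    (hG : ∀ (l : ℝ) (i j : Fin d), HasDerivAt (fun t => G t i j) (Gd l i j) l)
    (hG' : ∀ (l : ℝ) (i j : Fin d), HasDerivAt (fun t => G' t i j) (Gd' l i j) l)
    (hH : ∀ l : ℝ, HasDerivAt H (Hd l) l)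
    (hH' : ∀ l : ℝ, HasDerivAt H' (Hd' l) l)
    (hHd : ∀ l : ℝ, Hd l < 0)
    (l0 : ℝ) (hl0 : 0 < l0)
    (hfoc : β ⬝ᵥ (Gd l0).mulVec β + σ ^ 2 * Hd l0 = 0)
    (hii : (G l0 - G' l0).PosSemidef)
    (hiii : ((G l0 - G' l0) - ((H l0 - H' l0) / Hd l0) • Gd l0).PosSemidef) :
    β ⬝ᵥ (G' l0).mulVec β + σ ^ 2 * H' l0 ≤ β ⬝ᵥ (G l0).mulVec β + σ ^ 2 * H l0 := by
  have hHd0 : Hd l0 ≠ 0 := ne_of_lt (hHd l0)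
  have h1 := hiii.dotProduct_mulVec_nonneg β
  have h2 : β ⬝ᵥ (Gd l0).mulVec β = -(σ ^ 2 * Hd l0) := by linarith
  have h3 : (0 : ℝ) ≤ β ⬝ᵥ ((G l0 - G' l0) - ((H l0 - H' l0) / Hd l0) • Gd l0).mulVec β := by
    simpa using h1
  rw [sub_mulVec, sub_mulVec, smul_mulVec, dotProduct_sub, dotProduct_sub,
    dotProduct_smul, h2, smul_eq_mul] at h3
  have h4 : (H l0 - H' l0) / Hd l0 * -(σ ^ 2 * Hd l0) = -(σ ^ 2 * (H l0 - H' l0)) := by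
    field_simp
  rw [h4] at h3
  nlinarith [h3]
end
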